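/- Let (x_j)_{j∈J} be a frame of a Hilbert space H with upper frame bound B, let 0 < ε < B, and let (y_j)_{j∈J} be a family of vectors in H with Σ_{j∈J} ‖x_j − y_j‖² < ε. Then for all x, y ∈ H one has Σ_{j∈J} ||⟨x, y_j⟩| − |⟨y, y_j⟩||² ≥ Σ_{j∈J} ||⟨x, x_j⟩| − |⟨y, x_j⟩||² − 2 ε^{1/2} B^{1/2} (‖x‖ + ‖y‖)². -/
import Mathlib


open scoped ComplexInnerProductSpace ENNReal

private lemma stmt7_memℓp {J : Type*} (f : J → ℝ) (hf : Summable fun j => f j ^ 2) :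
    Memℓp f 2 := by
  apply memℓp_gen
  have h : ∀ j, ‖f j‖ ^ (2 : ℝ≥0∞).toReal = f j ^ 2 := fun j => by
    rw [ENNReal.toReal_ofNat, show ((2:ℝ)) = ((2:ℕ):ℝ) by norm_num, Real.rpow_natCast,
      Real.norm_eq_abs, sq_abs]
  simpa [h] using hf

private lemma stmt7_norm_sq {J : Type*} (f : lp (fun _ : J => ℝ) 2) :
    ‖f‖ ^ 2 = ∑' j, (f j) ^ 2 := by
  have h := lp.norm_rpow_eq_tsum (p := 2) (by norm_num) f
  rw [ENNReal.toReal_ofNat] at h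
  calc ‖f‖ ^ 2 = ‖f‖ ^ (2:ℝ) := by
        rw [show ((2:ℝ)) = ((2:ℕ):ℝ) by norm_num, Real.rpow_natCast]
    _ = ∑' j, (f j) ^ 2 := by
        rw [h]; congr 1; ext j
        rw [show ((2:ℝ)) = ((2:ℕ):ℝ) by norm_num, Real.rpow_natCast, Real.norm_eq_abs, sq_abs]

private lemma stmt7_l2 {J : Type*} (c c' : J → ℝ)
    (hc : Summable fun j => c j ^ 2) (hc' : Summable fun j => c' j ^ 2)
    (hd : Summable fun j => (c j - c' j) ^ 2)
    {Nb De : ℝ} (hNb0 : 0 ≤ Nb) (hDe0 : 0 ≤ De)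
    (hNb : ∑' j, c j ^ 2 ≤ Nb ^ 2) (hDe : ∑' j, (c j - c' j) ^ 2 ≤ De ^ 2) :
    ∑' j, c j ^ 2 - 2 * De * Nb ≤ ∑' j, c' j ^ 2 := by
  let F : lp (fun _ : J => ℝ) 2 := ⟨c, stmt7_memℓp c hc⟩
  let G : lp (fun _ : J => ℝ) 2 := ⟨c', stmt7_memℓp c' hc'⟩
  have hNsq : ‖F‖ ^ 2 = ∑' j, c j ^ 2 := stmt7_norm_sq F
  have hMsq : ‖G‖ ^ 2 = ∑' j, c' j ^ 2 := stmt7_norm_sq G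
  have hDsq : ‖F - G‖ ^ 2 = ∑' j, (c j - c' j) ^ 2 := by
    rw [stmt7_norm_sq (F - G)]
    refine tsum_congr fun j => ?_
    have : (F - G) j = F j - G j := by rw [lp.coeFn_sub]; rfl
    rw [this]
  have hN0 : (0:ℝ) ≤ ‖F‖ := norm_nonneg _
  have hM0 : (0:ℝ) ≤ ‖G‖ := norm_nonneg _
  have hD0 : (0:ℝ) ≤ ‖F - G‖ := norm_nonneg _
  have htri : ‖F‖ ≤ ‖G‖ + ‖F - G‖ := by
    calc ‖F‖ = ‖G + (F - G)‖ := by rw [add_sub_cancel]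
      _ ≤ ‖G‖ + ‖F - G‖ := norm_add_le _ _
  have hNle : ‖F‖ ≤ Nb := by nlinarith [hNsq ▸ hNb]
  have hDle : ‖F - G‖ ≤ De := by nlinarith [hDsq ▸ hDe]
  have key : ‖F‖ ^ 2 - ‖G‖ ^ 2 ≤ 2 * ‖F‖ * ‖F - G‖ := by
    rcases le_or_gt ‖F‖ ‖F - G‖ with h | h
    · nlinarith [sq_nonneg ‖G‖]
    · have h1 : (0:ℝ) ≤ ‖F‖ - ‖F - G‖ := by linarith
      have h2 : ‖F‖ - ‖F - G‖ ≤ ‖G‖ := by linarith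
      nlinarith [mul_self_le_mul_self h1 h2]
  have hprod : 2 * ‖F‖ * ‖F - G‖ ≤ 2 * De * Nb := by
    nlinarith [mul_nonneg hD0 hN0]
  rw [← hNsq, ← hMsq]; linarith

theorem stmt_7 {H : Type*} [NormedAddCommGroup H] [InnerProductSpace ℂ H] [CompleteSpace H]
    {J : Type*} (x y : J → H) (B ε : ℝ) (hB : 0 < B)
    (hx_summable : ∀ u : H, Summable fun j => ‖⟪u, x j⟫‖ ^ 2)
    (hx_upper : ∀ u : H, ∑' j, ‖⟪u, x j⟫‖ ^ 2 ≤ B * ‖u‖ ^ 2)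
    (hε : 0 < ε) (hεB : ε < B)
    (hpert_summable : Summable fun j => ‖x j - y j‖ ^ 2)
    (hpert : ∑' j, ‖x j - y j‖ ^ 2 < ε) :
    ∀ u v : H,
      (∑' j, (‖⟪u, x j⟫‖ - ‖⟪v, x j⟫‖) ^ 2) -
          2 * Real.sqrt ε * Real.sqrt B * (‖u‖ + ‖v‖) ^ 2 ≤
        ∑' j, (‖⟪u, y j⟫‖ - ‖⟪v, y j⟫‖) ^ 2 := by
  intro u v
  -- Pointwise perturbation bound
  have key : ∀ (w : H) (j : J), |‖⟪w, y j⟫‖ - ‖⟪w, x j⟫‖| ≤ ‖w‖ * ‖x j - y j‖ := by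
    intro w j
    calc |‖⟪w, y j⟫‖ - ‖⟪w, x j⟫‖| ≤ ‖⟪w, y j⟫ - ⟪w, x j⟫‖ := abs_norm_sub_norm_le _ _
      _ = ‖⟪w, y j - x j⟫‖ := by rw [inner_sub_right]
      _ ≤ ‖w‖ * ‖y j - x j‖ := norm_inner_le_norm _ _
      _ = ‖w‖ * ‖x j - y j‖ := by rw [norm_sub_rev]
  -- Summability for the perturbed family
  have hy_summable : ∀ w : H, Summable fun j => ‖⟪w, y j⟫‖ ^ 2 := by
    intro w
    apply Summable.of_nonneg_of_le (fun j => by positivity) (fun j => ?_)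
      (((hx_summable w).mul_left 2).add (hpert_summable.mul_left (2 * ‖w‖ ^ 2)))
    have h := (abs_le.mp (key w j)).2
    have h2 : ‖⟪w, y j⟫‖ ^ 2 ≤ (‖⟪w, x j⟫‖ + ‖w‖ * ‖x j - y j‖) ^ 2 := by
      apply pow_le_pow_left₀ (norm_nonneg _) (by linarith)
    nlinarith [sq_nonneg (‖⟪w, x j⟫‖ - ‖w‖ * ‖x j - y j‖)]
  set c : J → ℝ := fun j => ‖⟪u, x j⟫‖ - ‖⟪v, x j⟫‖ with hc_def
  set c' : J → ℝ := fun j => ‖⟪u, y j⟫‖ - ‖⟪v, y j⟫‖ with hc'_def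
  have hc_sq : ∀ j, c j ^ 2 ≤ ‖⟪u, x j⟫‖ ^ 2 + ‖⟪v, x j⟫‖ ^ 2 := by
    intro j
    have := mul_nonneg (norm_nonneg (⟪u, x j⟫ : ℂ)) (norm_nonneg (⟪v, x j⟫ : ℂ))
    simp only [hc_def]; nlinarith
  have hc'_sq : ∀ j, c' j ^ 2 ≤ ‖⟪u, y j⟫‖ ^ 2 + ‖⟪v, y j⟫‖ ^ 2 := by
    intro j
    have := mul_nonneg (norm_nonneg (⟪u, y j⟫ : ℂ)) (norm_nonneg (⟪v, y j⟫ : ℂ))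
    simp only [hc'_def]; nlinarith
  have hc : Summable fun j => c j ^ 2 :=
    Summable.of_nonneg_of_le (fun j => sq_nonneg _) hc_sq
      ((hx_summable u).add (hx_summable v))
  have hc' : Summable fun j => c' j ^ 2 :=
    Summable.of_nonneg_of_le (fun j => sq_nonneg _) hc'_sq
      ((hy_summable u).add (hy_summable v))
  -- pointwise bound on the difference
  have hdiff : ∀ j, (c j - c' j) ^ 2 ≤ (‖u‖ + ‖v‖) ^ 2 * ‖x j - y j‖ ^ 2 := by
    intro j
    have hu := abs_le.mp (key u j)
    have hv := abs_le.mp (key v j)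
    have habs : |c j - c' j| ≤ (‖u‖ + ‖v‖) * ‖x j - y j‖ := by
      rw [abs_le]; simp only [hc_def, hc'_def]
      constructor <;> nlinarith [hu.1, hu.2, hv.1, hv.2]
    calc (c j - c' j) ^ 2 = |c j - c' j| ^ 2 := (sq_abs _).symm
      _ ≤ ((‖u‖ + ‖v‖) * ‖x j - y j‖) ^ 2 := pow_le_pow_left₀ (abs_nonneg _) habs 2
      _ = (‖u‖ + ‖v‖) ^ 2 * ‖x j - y j‖ ^ 2 := by ring
  have hd : Summable fun j => (c j - c' j) ^ 2 :=
    Summable.of_nonneg_of_le (fun j => sq_nonneg _)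
      (fun j => hdiff j) (hpert_summable.mul_left ((‖u‖ + ‖v‖) ^ 2))
  -- bound on ∑ c²
  have hNb : ∑' j, c j ^ 2 ≤ (Real.sqrt B * (‖u‖ + ‖v‖)) ^ 2 := by
    have h1 : ∑' j, c j ^ 2 ≤ ∑' j, (‖⟪u, x j⟫‖ ^ 2 + ‖⟪v, x j⟫‖ ^ 2) :=
      Summable.tsum_le_tsum hc_sq hc ((hx_summable u).add (hx_summable v))
    rw [Summable.tsum_add (hx_summable u) (hx_summable v)] at h1
    have h2 := hx_upper u
    have h3 := hx_upper v
    have hsqB : Real.sqrt B ^ 2 = B := Real.sq_sqrt hB.le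
    have huv : 0 ≤ ‖u‖ * ‖v‖ := by positivity
    nlinarith [mul_nonneg hB.le huv]
  -- bound on ∑ (c - c')²
  have hDe : ∑' j, (c j - c' j) ^ 2 ≤ (Real.sqrt ε * (‖u‖ + ‖v‖)) ^ 2 := by
    have h1 : ∑' j, (c j - c' j) ^ 2 ≤ ∑' j, (‖u‖ + ‖v‖) ^ 2 * ‖x j - y j‖ ^ 2 :=
      Summable.tsum_le_tsum hdiff hd (hpert_summable.mul_left ((‖u‖ + ‖v‖) ^ 2))
    rw [tsum_mul_left] at h1
    have hsqε : Real.sqrt ε ^ 2 = ε := Real.sq_sqrt hε.le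
    nlinarith [sq_nonneg (‖u‖ + ‖v‖), hpert]
  have hmain := stmt7_l2 c c' hc hc' hd (by positivity) (by positivity) hNb hDe
  have heq : 2 * (Real.sqrt ε * (‖u‖ + ‖v‖)) * (Real.sqrt B * (‖u‖ + ‖v‖)) =
      2 * Real.sqrt ε * Real.sqrt B * (‖u‖ + ‖v‖) ^ 2 := by ring
  simp only [hc_def, hc'_def] at hmain
  linarith
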